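/- Let n be a positive integer not divisible by 3, and let k and l be integers with gcd(n, k, l) = 1 satisfying condition (C): n ∣ 3k or n ∣ 3l or n ∣ 3(k−l). Then there exists an integer p with gcd(p, n) = 1 and a group isomorphism φ : G_n(k,l) → G_n(0,p) that commutes with the shifts: φ ∘ θ = θ' ∘ φ, where θ and θ' denote the shift automorphisms of G_n(k,l) and G_n(0,p) respectively. -/

import Mathlib

namespace CPG

/-- The free group on generators `x_0, …, x_{n-1}` indexed by `ZMod n`. -/
abbrev FG (n : ℕ) := FreeGroup (ZMod n)

/-- The automorphism of the free group sending `x_j` to `x_{j+i}`. -/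
def shiftA (n : ℕ) (i : ZMod n) : MulAut (FG n) :=
  FreeGroup.freeGroupCongr (Equiv.addRight i)

/-- The shift automorphism `θ` of the free group, `x_j ↦ x_{j+1}`. -/
def shiftAut (n : ℕ) : MulAut (FG n) := shiftA n 1

/-- The `θ`-orbit of a word `w`: the relator set of the cyclic presentation `P_n(w)`. -/
def rels (n : ℕ) (w : FG n) : Set (FG n) := Set.range fun i : ZMod n => shiftA n i w

/-- The cyclically presented group `G_n(w)`. -/
abbrev Gp (n : ℕ) (w : FG n) := PresentedGroup (rels n w)

lemma shiftA_shiftA (n : ℕ) (i j : ZMod n) (x : FG n) :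
    shiftA n i (shiftA n j x) = shiftA n (j + i) x := by
  show FreeGroup.map _ (FreeGroup.map _ x) = FreeGroup.map _ x
  rw [FreeGroup.map.comp]
  have h : (⇑(Equiv.addRight i) ∘ ⇑(Equiv.addRight j)) = ⇑(Equiv.addRight (j + i)) := by
    funext z
    simp [add_assoc]
  rw [h]

lemma image_shiftAut_rels (n : ℕ) (w : FG n) :
    (shiftAut n) '' rels n w = rels n w := by
  ext r
  constructor
  · rintro ⟨s, ⟨i, rfl⟩, rfl⟩
    exact ⟨i + 1, (shiftA_shiftA n 1 i w).symm⟩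
  · rintro ⟨i, rfl⟩
    refine ⟨shiftA n (i - 1) w, ⟨i - 1, rfl⟩, ?_⟩
    rw [shiftAut, shiftA_shiftA, sub_add_cancel]

lemma map_normalClosure_rels (n : ℕ) (w : FG n) :
    (Subgroup.normalClosure (rels n w)).map (shiftAut n).toMonoidHom
      = Subgroup.normalClosure (rels n w) := by
  rw [Subgroup.map_normalClosure (rels n w) (shiftAut n).toMonoidHom (shiftAut n).surjective]
  congr 1
  exact image_shiftAut_rels n w

/-- The shift automorphism `θ` of the cyclically presented group `G_n(w)`. -/
def shiftG (n : ℕ) (w : FG n) : MulAut (Gp n w) :=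
  QuotientGroup.congr (Subgroup.normalClosure (rels n w)) (Subgroup.normalClosure (rels n w))
    (shiftAut n) (map_normalClosure_rels n w)

/-- The generator `x_k` (subscript mod `n`). -/
def xg (n : ℕ) (k : ℤ) : FG n := FreeGroup.of (k : ZMod n)

/-- The word `x_0 x_k x_l`. -/
def wkl (n : ℕ) (k l : ℤ) : FG n := xg n 0 * xg n k * xg n l

/-- The cyclically presented group `G_n(k,l) = G_n(x_0 x_k x_l)`. -/
abbrev Gkl (n : ℕ) (k l : ℤ) := Gp n (wkl n k l)

/-- The shift automorphism of `G_n(k,l)`. -/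
def shiftKL (n : ℕ) (k l : ℤ) : MulAut (Gkl n k l) := shiftG n (wkl n k l)

end CPG

namespace CPG

lemma shiftA_of (n : ℕ) (i a : ZMod n) : shiftA n i (FreeGroup.of a) = FreeGroup.of (a + i) :=
  rfl

lemma shiftA_wkl (n : ℕ) (k l : ℤ) (i : ZMod n) :
    shiftA n i (wkl n k l)
      = FreeGroup.of ((0 : ZMod n) + i) * FreeGroup.of ((k : ZMod n) + i)
        * FreeGroup.of ((l : ZMod n) + i) := by
  simp [wkl, xg, map_mul, shiftA_of]

lemma shiftG_mk (n : ℕ) (w : FG n) (x : FG n) :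
    shiftG n w (QuotientGroup.mk x) = QuotientGroup.mk (shiftAut n x) :=
  rfl

/-- If the normal closures of the relator sets agree, the cyclically presented groups are
isomorphic via an isomorphism commuting with the shifts. -/
lemma iso_of_closure_eq (n : ℕ) (w w' : FG n)
    (h : Subgroup.normalClosure (rels n w) = Subgroup.normalClosure (rels n w')) :
    ∃ φ : Gp n w ≃* Gp n w', ∀ g : Gp n w, φ (shiftG n w g) = shiftG n w' (φ g) := by
  have hmap : (Subgroup.normalClosure (rels n w)).map
      ((MulEquiv.refl (FG n)) : FG n →* FG n) = Subgroup.normalClosure (rels n w') := by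
    rw [← h]; exact Subgroup.map_id _
  set φ := QuotientGroup.congr (Subgroup.normalClosure (rels n w))
      (Subgroup.normalClosure (rels n w')) (MulEquiv.refl (FG n)) hmap with hφdef
  have hφ : ∀ y : FG n, φ (QuotientGroup.mk y) = QuotientGroup.mk y := fun y => rfl
  refine ⟨φ, fun g => ?_⟩
  induction g using QuotientGroup.induction_on with
  | H x =>
    exact (congrArg φ (shiftG_mk n w x)).trans
      (((hφ ((shiftAut n) x)).trans (shiftG_mk n w' x).symm).trans
        (congrArg (shiftG n w') (hφ x).symm))

lemma mem_closure_of_conj (n : ℕ) (w : FG n) (g a : FG n)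
    (ha : a ∈ rels n w) : g * a * g⁻¹ ∈ Subgroup.normalClosure (rels n w) :=
  (Subgroup.normalClosure_normal).conj_mem a (Subgroup.subset_normalClosure ha) g

lemma closure_eq_of (n : ℕ) (w w' : FG n)
    (h1 : ∀ r ∈ rels n w', r ∈ Subgroup.normalClosure (rels n w))
    (h2 : ∀ r ∈ rels n w, r ∈ Subgroup.normalClosure (rels n w')) :
    Subgroup.normalClosure (rels n w) = Subgroup.normalClosure (rels n w') :=
  le_antisymm (Subgroup.normalClosure_le_normal h2) (Subgroup.normalClosure_le_normal h1)

/-- Case `l ≡ 0`: `x_0 x_k x_0` and `x_0 x_0 x_k` have the same normal closure. -/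
lemma closure_case2 (n : ℕ) (k : ℤ) :
    Subgroup.normalClosure (rels n (wkl n k 0)) = Subgroup.normalClosure (rels n (wkl n 0 k)) := by
  apply closure_eq_of
  · rintro r ⟨i, rfl⟩
    dsimp only
    have key : shiftA n i (wkl n 0 k)
        = FreeGroup.of ((0:ZMod n) + i) * (shiftA n i (wkl n k 0)) * (FreeGroup.of ((0:ZMod n) + i))⁻¹ := by
      rw [shiftA_wkl, shiftA_wkl]
      push_cast
      group
    rw [key]
    exact mem_closure_of_conj n _ _ _ ⟨i, rfl⟩
  · rintro r ⟨i, rfl⟩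
    dsimp only
    have key : shiftA n i (wkl n k 0)
        = (FreeGroup.of ((0:ZMod n) + i))⁻¹ * (shiftA n i (wkl n 0 k)) * (FreeGroup.of ((0:ZMod n) + i))⁻¹⁻¹ := by
      rw [shiftA_wkl, shiftA_wkl]
      push_cast
      group
    rw [key]
    exact mem_closure_of_conj n _ _ _ ⟨i, rfl⟩

/-- Case `k ≡ l`: `x_0 x_k x_k` and `x_0 x_0 x_{-k}` have the same normal closure. -/
lemma closure_case3 (n : ℕ) (k : ℤ) :
    Subgroup.normalClosure (rels n (wkl n k k))
      = Subgroup.normalClosure (rels n (wkl n 0 (-k))) := by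
  apply closure_eq_of
  · rintro r ⟨i, rfl⟩
    dsimp only
    -- relator of wkl n 0 (-k) at i : x_i x_i x_{i-k}
    -- conjugate of relator of wkl n k k at i - k : x_{i-k} x_i x_i
    have key : shiftA n i (wkl n 0 (-k))
        = (FreeGroup.of ((0:ZMod n) + (i - (k:ZMod n))))⁻¹
            * (shiftA n (i - (k:ZMod n)) (wkl n k k))
            * (FreeGroup.of ((0:ZMod n) + (i - (k:ZMod n))))⁻¹⁻¹ := by
      rw [shiftA_wkl, shiftA_wkl]
      push_cast
      have h1 : (0 : ZMod n) + i = (k : ZMod n) + (i - (k : ZMod n)) := by ring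
      have h2 : -(k : ZMod n) + i = (0 : ZMod n) + (i - (k : ZMod n)) := by ring
      rw [h1, h2]
      group
    rw [key]
    exact mem_closure_of_conj n _ _ _ ⟨i - (k : ZMod n), rfl⟩
  · rintro r ⟨i, rfl⟩
    dsimp only
    have key : shiftA n i (wkl n k k)
        = (FreeGroup.of ((0:ZMod n) + i))
            * (shiftA n (i + (k:ZMod n)) (wkl n 0 (-k)))
            * (FreeGroup.of ((0:ZMod n) + i))⁻¹ := by
      rw [shiftA_wkl, shiftA_wkl]
      push_cast
      have h1 : (0 : ZMod n) + (i + (k:ZMod n)) = (k : ZMod n) + i := by ring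
      have h2 : -(k : ZMod n) + (i + (k:ZMod n)) = (0 : ZMod n) + i := by ring
      rw [h1, h2]
      group
    rw [key]
    exact mem_closure_of_conj n _ _ _ ⟨i + (k : ZMod n), rfl⟩

end CPG



/-- Under condition (C) with `gcd(n,k,l) = 1` and `3 ∤ n`, there is `p`
coprime to `n` and an isomorphism `G_n(k,l) ≃ G_n(0,p)` commuting with the shifts. -/
theorem statement13 (n : ℕ) (hn : 0 < n) (h3 : ¬ (3 ∣ n)) (k l : ℤ)
    (hgcd : Int.gcd (n : ℤ) (Int.gcd k l) = 1)
    (hC : (n : ℤ) ∣ 3 * k ∨ (n : ℤ) ∣ 3 * l ∨ (n : ℤ) ∣ 3 * (k - l)) :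
    ∃ p : ℤ, Int.gcd p (n : ℤ) = 1 ∧
      ∃ φ : CPG.Gkl n k l ≃* CPG.Gkl n 0 p,
        ∀ g : CPG.Gkl n k l, φ (CPG.shiftKL n k l g) = CPG.shiftKL n 0 p (φ g) := by
  have hcop3 : IsCoprime (n : ℤ) 3 := by
    rw [Int.isCoprime_iff_gcd_eq_one]
    simpa [Int.gcd] using (Nat.coprime_comm.mp
      ((Nat.Prime.coprime_iff_not_dvd (by norm_num : Nat.Prime 3)).2 h3))
  have hsimp : ∀ m : ℤ, (n : ℤ) ∣ 3 * m → (n : ℤ) ∣ m := fun m hm =>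
    IsCoprime.dvd_of_dvd_mul_left hcop3 hm
  have key : ∀ p : ℤ, (Int.gcd p (n:ℤ) : ℤ) ∣ k → (Int.gcd p (n:ℤ) : ℤ) ∣ l →
      Int.gcd p (n : ℤ) = 1 := by
    intro p hk hl
    have hdn : (Int.gcd p (n:ℤ) : ℤ) ∣ (n : ℤ) := Int.gcd_dvd_right _ _
    have h2 : (Int.gcd p (n:ℤ) : ℤ) ∣ (Int.gcd (n:ℤ) (Int.gcd k l) : ℤ) :=
      Int.dvd_coe_gcd hdn (Int.dvd_coe_gcd hk hl)
    rw [hgcd] at h2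
    have : Int.gcd p (n:ℤ) ∣ 1 := by exact_mod_cast h2
    exact Nat.dvd_one.mp this
  rcases hC with hc | hc | hc
  · -- n ∣ k : take p = l
    have hk : (n : ℤ) ∣ k := hsimp k hc
    have hkz : ((k : ℤ) : ZMod n) = 0 := (ZMod.intCast_zmod_eq_zero_iff_dvd k n).2 hk
    refine ⟨l, key l ((Int.gcd_dvd_right _ _).trans hk) (Int.gcd_dvd_left _ _), ?_⟩
    have hw : CPG.wkl n k l = CPG.wkl n 0 l := by
      unfold CPG.wkl CPG.xg
      rw [hkz]
      norm_num
    exact CPG.iso_of_closure_eq n (CPG.wkl n k l) (CPG.wkl n 0 l) (by rw [hw])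
  · -- n ∣ l : take p = k
    have hl : (n : ℤ) ∣ l := hsimp l hc
    have hlz : ((l : ℤ) : ZMod n) = 0 := (ZMod.intCast_zmod_eq_zero_iff_dvd l n).2 hl
    refine ⟨k, key k (Int.gcd_dvd_left _ _) ((Int.gcd_dvd_right _ _).trans hl), ?_⟩
    have hw : CPG.wkl n k l = CPG.wkl n k 0 := by
      unfold CPG.wkl CPG.xg
      rw [hlz]
      norm_num
    exact CPG.iso_of_closure_eq n (CPG.wkl n k l) (CPG.wkl n 0 k)
      (by rw [hw]; exact CPG.closure_case2 n k)
  · -- n ∣ k - l : take p = -k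
    have hkl : (n : ℤ) ∣ (k - l) := hsimp (k - l) hc
    have hklz : ((k : ℤ) : ZMod n) = ((l : ℤ) : ZMod n) := by
      have h0 : (((k - l : ℤ)) : ZMod n) = 0 := (ZMod.intCast_zmod_eq_zero_iff_dvd _ n).2 hkl
      push_cast at h0
      linear_combination h0
    have hdk : (Int.gcd (-k) (n:ℤ) : ℤ) ∣ k := by
      have : (Int.gcd (-k) (n:ℤ) : ℤ) ∣ -k := Int.gcd_dvd_left _ _
      exact (dvd_neg.mp this)
    have hdl : (Int.gcd (-k) (n:ℤ) : ℤ) ∣ l := by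
      have h1 : (Int.gcd (-k) (n:ℤ) : ℤ) ∣ (k - l) := (Int.gcd_dvd_right _ _).trans hkl
      have := dvd_sub hdk h1
      simpa using this
    refine ⟨-k, key (-k) hdk hdl, ?_⟩
    have hw : CPG.wkl n k l = CPG.wkl n k k := by
      unfold CPG.wkl CPG.xg
      rw [hklz]
    exact CPG.iso_of_closure_eq n (CPG.wkl n k l) (CPG.wkl n 0 (-k))
      (by rw [hw]; exact CPG.closure_case3 n k)
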